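/- Let f, g₁, g₂ be holomorphic on D ⊆ ℂ with f ≠ 0 everywhere. Then ‖Φ‖² > 0 for Φ = (f(g₁g₂+1), i f(g₁g₂−1), f(g₁+g₂), i f(g₁−g₂)) if and only if (|g₁|²−1)(|g₂|²−1) > 0, i.e., either both |g₁| > 1 and |g₂| > 1 or both |g₁| < 1 and |g₂| < 1 at each point. -/

import Mathlib

open Complex

/-- Indefinite Hermitian square ‖a‖² = |a₁|²+|a₂|²−|a₃|²−|a₄|². -/
noncomputable def nsq (x : Fin 4 → ℂ) : ℝ :=
  Complex.normSq (x 0) + Complex.normSq (x 1) - Complex.normSq (x 2) - Complex.normSq (x 3)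

/-- Weierstrass map Φ = (f(g₁g₂+1), i f(g₁g₂−1), f(g₁+g₂), i f(g₁−g₂)). -/
noncomputable def PhiW (f g₁ g₂ : ℂ → ℂ) (t : ℂ) : Fin 4 → ℂ :=
  ![f t * (g₁ t * g₂ t + 1), Complex.I * (f t * (g₁ t * g₂ t - 1)),
    f t * (g₁ t + g₂ t), Complex.I * (f t * (g₁ t - g₂ t))]


lemma aux_prod_pos (a b : ℝ) (ha : 0 ≤ a) (hb : 0 ≤ b) :
    0 < (a ^ 2 - 1) * (b ^ 2 - 1) ↔ (1 < a ∧ 1 < b) ∨ (a < 1 ∧ b < 1) := by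
  constructor
  · intro h
    rcases lt_trichotomy a 1 with h1 | h1 | h1
    · rcases lt_trichotomy b 1 with h2 | h2 | h2
      · exact Or.inr ⟨h1, h2⟩
      · exfalso; rw [h2] at h; simp at h
      · exfalso
        have pa : a ^ 2 - 1 < 0 := by nlinarith
        have pb : 0 < b ^ 2 - 1 := by nlinarith
        nlinarith [mul_neg_of_neg_of_pos pa pb]
    · exfalso; rw [h1] at h; simp at h
    · rcases lt_trichotomy b 1 with h2 | h2 | h2
      · exfalso
        have pa : 0 < a ^ 2 - 1 := by nlinarith
        have pb : b ^ 2 - 1 < 0 := by nlinarith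
        nlinarith [mul_neg_of_pos_of_neg pa pb]
      · exfalso; rw [h2] at h; simp at h
      · exact Or.inl ⟨h1, h2⟩
  · rintro (⟨u, v⟩ | ⟨u, v⟩)
    · have pa : 0 < a ^ 2 - 1 := by nlinarith
      have pb : 0 < b ^ 2 - 1 := by nlinarith
      exact mul_pos pa pb
    · have pa : a ^ 2 - 1 < 0 := by nlinarith
      have pb : b ^ 2 - 1 < 0 := by nlinarith
      exact mul_pos_of_neg_of_neg pa pb

/-- With f ≠ 0 everywhere, ‖Φ‖² > 0 iff (|g₁|²−1)(|g₂|²−1) > 0, i.e. iff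
either both |g₁| > 1, |g₂| > 1, or both |g₁| < 1, |g₂| < 1. -/
theorem stmt7 (D : Set ℂ) (hD : IsOpen D) (f g₁ g₂ : ℂ → ℂ)
    (hf : DifferentiableOn ℂ f D)
    (hg₁ : DifferentiableOn ℂ g₁ D) (hg₂ : DifferentiableOn ℂ g₂ D)
    (hf0 : ∀ t ∈ D, f t ≠ 0) :
    ∀ t ∈ D,
      (0 < nsq (PhiW f g₁ g₂ t) ↔
        0 < (Complex.normSq (g₁ t) - 1) * (Complex.normSq (g₂ t) - 1)) ∧
      (0 < (Complex.normSq (g₁ t) - 1) * (Complex.normSq (g₂ t) - 1) ↔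
        ((1 < ‖g₁ t‖ ∧ 1 < ‖g₂ t‖) ∨
         (‖g₁ t‖ < 1 ∧ ‖g₂ t‖ < 1))) := by
  intro t ht
  have hfs : 0 < Complex.normSq (f t) := Complex.normSq_pos.2 (hf0 t ht)
  have key : nsq (PhiW f g₁ g₂ t) =
      2 * Complex.normSq (f t) *
        ((Complex.normSq (g₁ t) - 1) * (Complex.normSq (g₂ t) - 1)) := by
    simp only [nsq, PhiW, Matrix.cons_val_zero, Matrix.cons_val_one, Matrix.head_cons,
      Matrix.cons_val_two, Matrix.tail_cons, Matrix.cons_val_three,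
      Complex.normSq_apply, Complex.mul_re, Complex.mul_im, Complex.add_re, Complex.add_im,
      Complex.sub_re, Complex.sub_im, Complex.one_re, Complex.one_im, Complex.I_re,
      Complex.I_im]
    ring
  constructor
  · rw [key]
    constructor
    · intro h
      nlinarith
    · intro h
      nlinarith
  · have h1 : ‖g₁ t‖ ^ 2 = Complex.normSq (g₁ t) := Complex.sq_norm _
    have h2 : ‖g₂ t‖ ^ 2 = Complex.normSq (g₂ t) := Complex.sq_norm _
    rw [← h1, ← h2]
    exact aux_prod_pos _ _ (norm_nonneg _) (norm_nonneg _)
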